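/- In a finite simple connected graph G on n ≥ 5 vertices with the property that N(v₁) ≠ N(v₂) for all distinct non-adjacent vertices v₁, v₂, every edge of G that is not contained in any triangle is necessary. -/

import Mathlib

/-- The set of connected triples of a graph: `3`-subsets of the vertex set
inducing a connected subgraph. -/
def connTriples {V : Type*} (G : SimpleGraph V) : Set (Finset V) :=
  {X | X.card = 3 ∧ (G.induce (X : Set V)).Connected}

namespace Stmt14Aux

variable {V : Type*}

lemma induce_connected_of_center (G : SimpleGraph V) {s : Set V} {c : V} (hc : c ∈ s)
    (h : ∀ a ∈ s, a = c ∨ G.Adj c a) : (G.induce s).Connected := by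
  rw [SimpleGraph.connected_iff]
  have key : ∀ x : s, (G.induce s).Reachable ⟨c, hc⟩ x := by
    rintro ⟨x, hx⟩
    rcases h x hx with rfl | hadj
    · exact SimpleGraph.Reachable.refl _
    · exact SimpleGraph.Adj.reachable (by simpa using hadj)
  exact ⟨fun a b => (key a).symm.trans (key b), ⟨⟨c, hc⟩⟩⟩

lemma exists_adj_of_connected (G : SimpleGraph V) {s : Set V}
    (h : (G.induce s).Connected) {a b : V} (ha : a ∈ s) (hb : b ∈ s) (hab : a ≠ b) :
    ∃ c ∈ s, G.Adj a c := by
  obtain ⟨w⟩ := h.preconnected ⟨a, ha⟩ ⟨b, hb⟩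
  have hnil : ¬ w.Nil := SimpleGraph.Walk.not_nil_of_ne (by simpa using hab)
  exact ⟨(w.getVert 1 : s), (w.getVert 1).2, by simpa using w.adj_snd hnil⟩

lemma mem_connTriples_iff [DecidableEq V] (G : SimpleGraph V) {x y z : V}
    (hxy : x ≠ y) (hxz : x ≠ z) (hyz : y ≠ z) :
    ({x, y, z} : Finset V) ∈ connTriples G ↔
      (G.Adj x y ∧ G.Adj x z) ∨ (G.Adj y x ∧ G.Adj y z) ∨ (G.Adj z x ∧ G.Adj z y) := by
  have hcard : ({x, y, z} : Finset V).card = 3 := by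
    rw [Finset.card_insert_of_notMem (by simp [hxy, hxz]),
        Finset.card_insert_of_notMem (by simp [hyz]), Finset.card_singleton]
  simp only [connTriples, Set.mem_setOf_eq, hcard, true_and]
  constructor
  · intro hconn
    have hx' : x ∈ (({x, y, z} : Finset V) : Set V) := by simp
    have hy' : y ∈ (({x, y, z} : Finset V) : Set V) := by simp
    have hz' : z ∈ (({x, y, z} : Finset V) : Set V) := by simp
    have memcase : ∀ c : V, c ∈ (({x, y, z} : Finset V) : Set V) → c = x ∨ c = y ∨ c = z := by
      intro c hcm
      simpa using hcm
    have Hx : G.Adj x y ∨ G.Adj x z := by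
      obtain ⟨c, hcm, hadj⟩ := exists_adj_of_connected G hconn hx' hy' hxy
      rcases memcase c hcm with rfl | rfl | rfl
      · exact absurd hadj (G.loopless.irrefl _)
      · exact Or.inl hadj
      · exact Or.inr hadj
    have Hy : G.Adj y x ∨ G.Adj y z := by
      obtain ⟨c, hcm, hadj⟩ := exists_adj_of_connected G hconn hy' hx' hxy.symm
      rcases memcase c hcm with rfl | rfl | rfl
      · exact Or.inl hadj
      · exact absurd hadj (G.loopless.irrefl _)
      · exact Or.inr hadj
    have Hz : G.Adj z x ∨ G.Adj z y := by
      obtain ⟨c, hcm, hadj⟩ := exists_adj_of_connected G hconn hz' hx' hxz.symm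
      rcases memcase c hcm with rfl | rfl | rfl
      · exact Or.inl hadj
      · exact Or.inr hadj
      · exact absurd hadj (G.loopless.irrefl _)
    rcases Hx with h1 | h1
    · rcases Hy with h2 | h2
      · rcases Hz with h3 | h3
        · exact Or.inl ⟨h1, h3.symm⟩
        · exact Or.inr (Or.inl ⟨h2, h3.symm⟩)
      · exact Or.inr (Or.inl ⟨h1.symm, h2⟩)
    · rcases Hy with h2 | h2
      · exact Or.inl ⟨h2.symm, h1⟩
      · exact Or.inr (Or.inr ⟨h1.symm, h2.symm⟩)
  · have memcase : ∀ c : V, c ∈ (({x, y, z} : Finset V) : Set V) → c = x ∨ c = y ∨ c = z := by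
      intro c hcm
      simpa using hcm
    rintro (⟨h1, h2⟩ | ⟨h1, h2⟩ | ⟨h1, h2⟩)
    · refine induce_connected_of_center G (c := x) (by simp) ?_
      intro a ha
      rcases memcase a ha with rfl | rfl | rfl
      · exact Or.inl rfl
      · exact Or.inr h1
      · exact Or.inr h2
    · refine induce_connected_of_center G (c := y) (by simp) ?_
      intro a ha
      rcases memcase a ha with rfl | rfl | rfl
      · exact Or.inr h1
      · exact Or.inl rfl
      · exact Or.inr h2
    · refine induce_connected_of_center G (c := z) (by simp) ?_
      intro a ha
      rcases memcase a ha with rfl | rfl | rfl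
      · exact Or.inr h1
      · exact Or.inr h2
      · exact Or.inl rfl

lemma aux [Fintype V] [DecidableEq V] (G H : SimpleGraph V) (u v : V)
    (hc : G.Connected) (h5 : 5 ≤ Fintype.card V)
    (hN : ∀ v₁ v₂ : V, v₁ ≠ v₂ → ¬ G.Adj v₁ v₂ →
      G.neighborSet v₁ ≠ G.neighborSet v₂)
    (huv : G.Adj u v)
    (htri : ∀ w : V, ¬ (G.Adj u w ∧ G.Adj v w))
    (hHuv : ¬ H.Adj u v) (hT : connTriples H = connTriples G)
    (b : V) (hbu : b ≠ u) (hvb : G.Adj v b) : False := by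
  have hne_uv : u ≠ v := huv.ne
  have hub : ¬ G.Adj u b := fun h => htri b ⟨h, hvb⟩
  have hbv : b ≠ v := hvb.ne'
  -- F1v : neighbors of v give H-edges to both u and v
  have F1v : ∀ w, w ≠ u → G.Adj v w → H.Adj u w ∧ H.Adj v w := by
    intro w hwu hvw
    have hwv : w ≠ v := hvw.ne'
    have hG : ({u, v, w} : Finset V) ∈ connTriples G :=
      (mem_connTriples_iff G hne_uv (Ne.symm hwu) (Ne.symm hwv)).mpr
        (Or.inr (Or.inl ⟨huv.symm, hvw⟩))
    have hH : ({u, v, w} : Finset V) ∈ connTriples H := by rw [hT]; exact hG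
    rcases (mem_connTriples_iff H hne_uv (Ne.symm hwu) (Ne.symm hwv)).mp hH with
      ⟨h1, h2⟩ | ⟨h1, h2⟩ | ⟨h1, h2⟩
    · exact absurd h1 hHuv
    · exact absurd h1.symm hHuv
    · exact ⟨h1.symm, h2.symm⟩
  -- F1u : neighbors of u give H-edges to both u and v
  have F1u : ∀ w, w ≠ v → G.Adj u w → H.Adj u w ∧ H.Adj v w := by
    intro w hwv huw
    have hwu : w ≠ u := huw.ne'
    have hG : ({u, v, w} : Finset V) ∈ connTriples G :=
      (mem_connTriples_iff G hne_uv (Ne.symm hwu) (Ne.symm hwv)).mpr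
        (Or.inl ⟨huv, huw⟩)
    have hH : ({u, v, w} : Finset V) ∈ connTriples H := by rw [hT]; exact hG
    rcases (mem_connTriples_iff H hne_uv (Ne.symm hwu) (Ne.symm hwv)).mp hH with
      ⟨h1, h2⟩ | ⟨h1, h2⟩ | ⟨h1, h2⟩
    · exact absurd h1 hHuv
    · exact absurd h1.symm hHuv
    · exact ⟨h1.symm, h2.symm⟩
  -- F2v : v cannot have two H-neighbors that are both G-non-neighbors of v
  have F2v : ∀ a b' : V, a ≠ b' → a ≠ v → b' ≠ v → ¬ G.Adj v a → ¬ G.Adj v b' →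
      H.Adj v a → H.Adj v b' → False := by
    intro a b' hab hav hbv' hGa hGb Ha Hb
    have hH : ({v, a, b'} : Finset V) ∈ connTriples H :=
      (mem_connTriples_iff H (Ne.symm hav) (Ne.symm hbv') hab).mpr (Or.inl ⟨Ha, Hb⟩)
    have hG : ({v, a, b'} : Finset V) ∈ connTriples G := by rw [← hT]; exact hH
    rcases (mem_connTriples_iff G (Ne.symm hav) (Ne.symm hbv') hab).mp hG with
      ⟨h1, h2⟩ | ⟨h1, h2⟩ | ⟨h1, h2⟩
    · exact hGa h1
    · exact hGa h1.symm
    · exact hGb h1.symm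
  -- F2u : same for u
  have F2u : ∀ a b' : V, a ≠ b' → a ≠ u → b' ≠ u → ¬ G.Adj u a → ¬ G.Adj u b' →
      H.Adj u a → H.Adj u b' → False := by
    intro a b' hab hav hbv' hGa hGb Ha Hb
    have hH : ({u, a, b'} : Finset V) ∈ connTriples H :=
      (mem_connTriples_iff H (Ne.symm hav) (Ne.symm hbv') hab).mpr (Or.inl ⟨Ha, Hb⟩)
    have hG : ({u, a, b'} : Finset V) ∈ connTriples G := by rw [← hT]; exact hH
    rcases (mem_connTriples_iff G (Ne.symm hav) (Ne.symm hbv') hab).mp hG with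
      ⟨h1, h2⟩ | ⟨h1, h2⟩ | ⟨h1, h2⟩
    · exact hGa h1
    · exact hGa h1.symm
    · exact hGb h1.symm
  -- N(v) \ {u} = {b}
  have hNv1 : ∀ b', b' ≠ u → G.Adj v b' → b' = b := by
    intro b' hb'u hvb'
    by_contra hne
    exact F2u b b' (fun h => hne h.symm) hbu hb'u hub (fun h => htri b' ⟨h, hvb'⟩)
      (F1v b hbu hvb).1 (F1v b' hb'u hvb').1
  have hHub : H.Adj u b := (F1v b hbu hvb).1
  have hHvb : H.Adj v b := (F1v b hbu hvb).2
  -- N(u) ⊆ N(b)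
  have Nsub : ∀ w, G.Adj u w → G.Adj b w := by
    intro w huw
    by_cases hwv : w = v
    · subst hwv; exact hvb.symm
    · have hwu : w ≠ u := huw.ne'
      have hwb : w ≠ b := fun h => hub (h ▸ huw)
      have hHuw : H.Adj u w := (F1u w hwv huw).1
      have hH : ({u, w, b} : Finset V) ∈ connTriples H :=
        (mem_connTriples_iff H (Ne.symm hwu) (Ne.symm hbu) hwb).mpr
          (Or.inl ⟨hHuw, hHub⟩)
      have hG : ({u, w, b} : Finset V) ∈ connTriples G := by rw [← hT]; exact hH
      rcases (mem_connTriples_iff G (Ne.symm hwu) (Ne.symm hbu) hwb).mp hG with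
        ⟨h1, h2⟩ | ⟨h1, h2⟩ | ⟨h1, h2⟩
      · exact absurd h2 hub
      · exact h2.symm
      · exact absurd h1.symm hub
  -- get e ∈ N(b) \ N(u)
  have hexE : ∃ e, G.Adj b e ∧ ¬ G.Adj u e := by
    by_contra h
    push_neg at h
    apply hN u b (fun h' => hbu h'.symm) hub
    ext w
    simp only [SimpleGraph.mem_neighborSet]
    exact ⟨fun h' => Nsub w h', fun h' => h w h'⟩
  -- key : any G-neighbor of b which is not a G-neighbor of u behaves like e
  have keyE : ∀ e, G.Adj b e → ¬ G.Adj u e →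
      (H.Adj v e ∧ ¬ H.Adj b e ∧ ¬ G.Adj v e ∧ e ≠ u ∧ e ≠ v ∧ e ≠ b) := by
    intro e hbe hue
    have heu : e ≠ u := by rintro rfl; exact hub hbe.symm
    have hev : e ≠ v := by rintro rfl; exact hue huv
    have heb : e ≠ b := hbe.ne'
    have hve : ¬ G.Adj v e := fun h => heb (hNv1 e heu h)
    have hnG : ({u, b, e} : Finset V) ∉ connTriples G := by
      rw [mem_connTriples_iff G (Ne.symm hbu) (Ne.symm heu) (Ne.symm heb)]
      rintro (⟨h1, h2⟩ | ⟨h1, h2⟩ | ⟨h1, h2⟩)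
      · exact hub h1
      · exact hub h1.symm
      · exact hue h1.symm
    have hnH : ({u, b, e} : Finset V) ∉ connTriples H := by
      rw [hT]; exact hnG
    have hHbe : ¬ H.Adj b e := by
      intro h
      exact hnH ((mem_connTriples_iff H (Ne.symm hbu) (Ne.symm heu) (Ne.symm heb)).mpr
        (Or.inr (Or.inl ⟨hHub.symm, h⟩)))
    have hG2 : ({v, b, e} : Finset V) ∈ connTriples G :=
      (mem_connTriples_iff G (Ne.symm hbv) (Ne.symm hev) (Ne.symm heb)).mpr
        (Or.inr (Or.inl ⟨hvb.symm, hbe⟩))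
    have hH2 : ({v, b, e} : Finset V) ∈ connTriples H := by rw [hT]; exact hG2
    rcases (mem_connTriples_iff H (Ne.symm hbv) (Ne.symm hev) (Ne.symm heb)).mp hH2 with
      ⟨h1, h2⟩ | ⟨h1, h2⟩ | ⟨h1, h2⟩
    · exact ⟨h2, hHbe, hve, heu, hev, heb⟩
    · exact absurd h2 hHbe
    · exact absurd h2.symm hHbe
  obtain ⟨e, hbe, hue⟩ := hexE
  obtain ⟨hHve, hHbe, hve, heu, hev, heb⟩ := keyE e hbe hue
  by_cases ha : ∃ a, a ≠ v ∧ G.Adj u a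
  · -- case (i) : u has another neighbor a
    obtain ⟨a, hav, hua⟩ := ha
    have hHva : H.Adj v a := (F1u a hav hua).2
    have hvaG : ¬ G.Adj v a := fun h => htri a ⟨hua, h⟩
    have hae : a ≠ e := fun h => hue (h ▸ hua)
    exact F2v a e hae hav hev hvaG hve hHva hHve
  · -- case (ii) : N(u) = {v}
    push_neg at ha
    have hNusub : ∀ w, G.Adj u w → w = v := by
      intro w h
      by_contra hw
      exact ha w hw h
    -- N(b) ⊆ {v, e}
    have hNb : ∀ w, G.Adj b w → w = v ∨ w = e := by
      intro w hbw
      by_contra h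
      push_neg at h
      obtain ⟨hwv, hwe⟩ := h
      have huw : ¬ G.Adj u w := fun h' => hwv (hNusub w h')
      obtain ⟨hHvw, _, hvw, _, _, _⟩ := keyE w hbw huw
      exact F2v e w (fun h' => hwe h'.symm) hev hwv hve hvw hHve hHvw
    -- find a vertex outside {u, v, b, e}
    have hxex : ∃ x, x ∉ ({u, v, b, e} : Finset V) := by
      by_contra h
      push_neg at h
      have hsub : (Finset.univ : Finset V) ⊆ {u, v, b, e} := fun x _ => h x
      have := Finset.card_le_card hsub
      have h1 := Finset.card_insert_le u ({v, b, e} : Finset V)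
      have h2 := Finset.card_insert_le v ({b, e} : Finset V)
      have h3 := Finset.card_insert_le b ({e} : Finset V)
      simp only [Finset.card_univ, Finset.card_singleton] at *
      omega
    obtain ⟨x, hx⟩ := hxex
    obtain ⟨w⟩ := hc.preconnected x u
    have hxS : x ∈ {z | z ∉ ({u, v, b, e} : Finset V)} := hx
    have huS : u ∉ {z | z ∉ ({u, v, b, e} : Finset V)} := by
      simp only [Set.mem_setOf_eq, not_not]
      simp
    obtain ⟨d, -, hdS, hdS'⟩ := w.exists_boundary_dart _ hxS huS
    simp only [Set.mem_setOf_eq, not_not] at hdS hdS'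
    set y := d.fst with hy
    have hymem : y ∉ ({u, v, b, e} : Finset V) := hdS
    have hyu : y ≠ u := by intro h; apply hymem; simp [h]
    have hyv : y ≠ v := by intro h; apply hymem; simp [h]
    have hyb : y ≠ b := by intro h; apply hymem; simp [h]
    have hye : y ≠ e := by intro h; apply hymem; simp [h]
    have hadj : G.Adj y d.snd := d.adj
    have hsnd : d.snd = e := by
      have := hdS'
      simp only [Finset.mem_insert, Finset.mem_singleton] at this
      rcases this with rfl | rfl | rfl | rfl
      · exact absurd (hNusub y hadj.symm) hyv
      · exact absurd (hNv1 y hyu hadj.symm) hyb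
      · rcases hNb y hadj.symm with rfl | rfl
        · exact absurd rfl hyv
        · exact absurd rfl hye
      · rfl
    rw [hsnd] at hadj
    have hey : G.Adj e y := hadj.symm
    -- {b, e, y} ∈ T G (center e)
    have hG3 : ({b, e, y} : Finset V) ∈ connTriples G :=
      (mem_connTriples_iff G (Ne.symm heb) (Ne.symm hyb) (Ne.symm hye)).mpr
        (Or.inr (Or.inl ⟨hbe.symm, hey⟩))
    have hH3 : ({b, e, y} : Finset V) ∈ connTriples H := by rw [hT]; exact hG3
    have hHby : H.Adj b y := by
      rcases (mem_connTriples_iff H (Ne.symm heb) (Ne.symm hyb) (Ne.symm hye)).mp hH3 with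
        ⟨h1, h2⟩ | ⟨h1, h2⟩ | ⟨h1, h2⟩
      · exact absurd h1 hHbe
      · exact absurd h1.symm hHbe
      · exact h1.symm
    -- {u, b, y} ∉ T G but ∈ T H
    have hnG4 : ({u, b, y} : Finset V) ∉ connTriples G := by
      rw [mem_connTriples_iff G (Ne.symm hbu) (Ne.symm hyu) (Ne.symm hyb)]
      rintro (⟨h1, h2⟩ | ⟨h1, h2⟩ | ⟨h1, h2⟩)
      · exact hub h1
      · rcases hNb y h2 with rfl | rfl
        · exact hyv rfl
        · exact hye rfl
      · exact hyv (hNusub y h1.symm)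
    apply hnG4
    rw [← hT]
    exact (mem_connTriples_iff H (Ne.symm hbu) (Ne.symm hyu) (Ne.symm hyb)).mpr
      (Or.inr (Or.inl ⟨hHub.symm, hHby⟩))

end Stmt14Aux

/-- In a connected graph on `n ≥ 5` vertices in which distinct non-adjacent
vertices have distinct neighborhoods, every edge not contained in a triangle is
necessary. -/
theorem stmt14 {V : Type*} [Fintype V] (G : SimpleGraph V) (hc : G.Connected)
    (h5 : 5 ≤ Fintype.card V)
    (hN : ∀ v₁ v₂ : V, v₁ ≠ v₂ → ¬ G.Adj v₁ v₂ →
      G.neighborSet v₁ ≠ G.neighborSet v₂)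
    (u v : V) (huv : G.Adj u v)
    (htri : ∀ w : V, ¬ (G.Adj u w ∧ G.Adj v w)) :
    ¬ ∃ H : SimpleGraph V, ¬ H.Adj u v ∧ connTriples H = connTriples G := by
  classical
  rintro ⟨H, hHuv, hT⟩
  -- find a vertex outside {u, v} adjacent to u or v
  have hxex : ∃ x, x ∉ ({u, v} : Finset V) := by
    by_contra h
    push_neg at h
    have hsub : (Finset.univ : Finset V) ⊆ {u, v} := fun x _ => h x
    have := Finset.card_le_card hsub
    have h1 := Finset.card_insert_le u ({v} : Finset V)
    simp only [Finset.card_univ, Finset.card_singleton] at *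
    omega
  obtain ⟨x, hx⟩ := hxex
  obtain ⟨w⟩ := hc.preconnected x u
  have hxS : x ∈ {z | z ∉ ({u, v} : Finset V)} := hx
  have huS : u ∉ {z | z ∉ ({u, v} : Finset V)} := by
    simp only [Set.mem_setOf_eq, not_not]
    simp
  obtain ⟨d, -, hdS, hdS'⟩ := w.exists_boundary_dart _ hxS huS
  simp only [Set.mem_setOf_eq, not_not] at hdS hdS'
  have hyu : d.fst ≠ u := by intro h; apply hdS; simp [h]
  have hyv : d.fst ≠ v := by intro h; apply hdS; simp [h]
  have hadj : G.Adj d.fst d.snd := d.adj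
  simp only [Finset.mem_insert, Finset.mem_singleton] at hdS'
  rcases hdS' with h | h
  · -- d.snd = u : y is a neighbor of u, apply aux with roles of u, v swapped
    rw [h] at hadj
    exact Stmt14Aux.aux G H v u hc h5 hN huv.symm
      (fun w' hw' => htri w' ⟨hw'.2, hw'.1⟩)
      (fun h' => hHuv h'.symm) hT d.fst hyv hadj.symm
  · -- d.snd = v : y is a neighbor of v
    rw [h] at hadj
    exact Stmt14Aux.aux G H u v hc h5 hN huv htri hHuv hT d.fst hyu hadj.symm
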